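/- Let V ≠ {0} be a normed vector space, X ≠ {0} a Banach space, and E a reasonable sequence space of X-valued sequences. The set C_{V,E} = {u : V → E : u linear, continuous, non-surjective and non-injective} is (1, 𝔠)-lineable: for every nonzero v ∈ C_{V,E} there is a subspace W of L(V, E) of dimension 𝔠 with v ∈ W ⊆ C_{V,E} ∪ {0}. -/

import Mathlib

open Set Filter

/-- Exponential sums with distinct bases in (0,1] vanishing on an infinite set of
naturals have all coefficients zero. -/
lemma expsum_eq_zero (s : Finset ℝ) : ∀ (c : ℝ → ℝ), (∀ t ∈ s, t ∈ Set.Ioc (0:ℝ) 1) →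
    ({n : ℕ | ∑ t ∈ s, c t * t ^ n = 0}.Infinite) → ∀ t ∈ s, c t = 0 := by
  classical
  induction s using Finset.strongInduction with
  | _ s ih =>
    intro c hs hinf t ht
    obtain ⟨t₁, ht₁, hmax⟩ := s.exists_max_image id ⟨t, ht⟩
    have ht₁pos : (0:ℝ) < t₁ := (hs t₁ ht₁).1
    -- the rescaled sums tend to c t₁
    have htend : Tendsto (fun n : ℕ => ∑ t' ∈ s, c t' * (t' / t₁) ^ n) atTop (nhds (c t₁)) := by
      have h1 : ∀ n : ℕ, ∑ t' ∈ s, c t' * (t' / t₁) ^ n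
          = c t₁ * (t₁ / t₁) ^ n + ∑ t' ∈ s.erase t₁, c t' * (t' / t₁) ^ n :=
        fun n => (Finset.add_sum_erase s _ ht₁).symm
      have h2 : Tendsto (fun n : ℕ => ∑ t' ∈ s.erase t₁, c t' * (t' / t₁) ^ n) atTop
          (nhds (∑ t' ∈ s.erase t₁, (0:ℝ))) := by
        refine tendsto_finset_sum _ (fun i hi => ?_)
        have hilt : i < t₁ :=
          lt_of_le_of_ne (hmax i (Finset.mem_of_mem_erase hi)) (Finset.ne_of_mem_erase hi)
        have : Tendsto (fun n : ℕ => (i / t₁) ^ n) atTop (nhds 0) := by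
          apply tendsto_pow_atTop_nhds_zero_of_abs_lt_one
          rw [abs_div, abs_of_pos (hs i (Finset.mem_of_mem_erase hi)).1, abs_of_pos ht₁pos]
          exact (div_lt_one ht₁pos).2 hilt
        simpa using this.const_mul (c i)
      simp only [div_self (ne_of_gt ht₁pos), one_pow, mul_one] at h1
      simp only [Finset.sum_const_zero] at h2
      have := (tendsto_const_nhds (x := c t₁)).add h2
      simp only [add_zero] at this
      exact this.congr (fun n => (h1 n).symm)
    have hfreq : ∃ᶠ n : ℕ in atTop, (∑ t' ∈ s, c t' * (t' / t₁) ^ n) ∈ ({0} : Set ℝ) := by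
      have : ∃ᶠ n : ℕ in atTop, n ∈ {n : ℕ | ∑ t ∈ s, c t * t ^ n = 0} :=
        Nat.frequently_atTop_iff_infinite.2 hinf
      refine this.mono (fun n hn => ?_)
      have : ∑ t' ∈ s, c t' * (t' / t₁) ^ n = (∑ t' ∈ s, c t' * t' ^ n) / t₁ ^ n := by
        rw [Finset.sum_div]
        refine Finset.sum_congr rfl (fun i _ => ?_)
        rw [div_pow, mul_div_assoc]
      rw [Set.mem_setOf_eq] at hn
      simp only [Set.mem_singleton_iff, this, hn, zero_div]
    have hct₁ : c t₁ = 0 := isClosed_singleton.mem_of_frequently_of_tendsto hfreq htend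
    -- now use the induction hypothesis on s.erase t₁
    have herase : ∀ t' ∈ s.erase t₁, c t' = 0 := by
      refine ih (s.erase t₁) (Finset.erase_ssubset ht₁) c
        (fun t' ht' => hs t' (Finset.mem_of_mem_erase ht')) ?_
      refine hinf.mono (fun n hn => ?_)
      have := Finset.add_sum_erase s (fun t' => c t' * t' ^ n) ht₁
      simp only [Set.mem_setOf_eq] at hn ⊢
      simp only [hct₁, zero_mul, zero_add] at this
      rw [this, hn]
    by_cases h : t = t₁
    · rw [h]; exact hct₁
    · exact herase t (Finset.mem_erase.2 ⟨h, ht⟩)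

section Ops

variable {X E : Type*}
    [NormedAddCommGroup X] [NormedSpace ℝ X]
    [NormedAddCommGroup E] [NormedSpace ℝ E]
    (coord : E →ₗ[ℝ] (ℕ → X)) (hinj : Function.Injective coord)
    (hmul : ∀ (α : ℕ → ℝ) (C : ℝ), (∀ n, |α n| ≤ C) → ∀ x : E,
      ∃ y : E, coord y = (fun n => α n • coord x n) ∧ ‖y‖ ≤ C * ‖x‖)

/-- The diagonal multiplication operator associated with a bounded scalar sequence. -/
noncomputable def Dop (α : ℕ → ℝ) (C : ℝ) (h : ∀ n, |α n| ≤ C) : E →L[ℝ] E :=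
  LinearMap.mkContinuous
    { toFun := fun x => (hmul α C h x).choose
      map_add' := fun x y => by
        apply hinj
        rw [map_add coord (hmul α C h x).choose (hmul α C h y).choose, (hmul α C h (x + y)).choose_spec.1, (hmul α C h x).choose_spec.1,
          (hmul α C h y).choose_spec.1]
        funext n
        simp [smul_add]
      map_smul' := fun r x => by
        apply hinj
        rw [map_smul coord _ (hmul α C h x).choose, (hmul α C h (r • x)).choose_spec.1, (hmul α C h x).choose_spec.1]
        funext n
        simp [smul_comm r (α n)] }
    C (fun x => (hmul α C h x).choose_spec.2)

lemma coord_Dop (α : ℕ → ℝ) (C : ℝ) (h : ∀ n, |α n| ≤ C) (x : E) :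
    coord (Dop coord hinj hmul α C h x) = fun n => α n • coord x n :=
  (hmul α C h x).choose_spec.1

end Ops

section Cases

variable {V X E : Type*}
    [NormedAddCommGroup V] [NormedSpace ℝ V]
    [NormedAddCommGroup X] [NormedSpace ℝ X]
    [NormedAddCommGroup E] [NormedSpace ℝ E]
    (coord : E →ₗ[ℝ] (ℕ → X)) (hinj : Function.Injective coord)
    (hmul : ∀ (α : ℕ → ℝ) (C : ℝ), (∀ n, |α n| ≤ C) → ∀ x : E,
      ∃ y : E, coord y = (fun n => α n • coord x n) ∧ ‖y‖ ≤ C * ‖x‖)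
    (x₀ : X) (hx₀ : x₀ ≠ 0)
    (e : ℕ → E) (he : ∀ n, coord (e n) = fun m => if m = n then x₀ else 0)
    (v : V →L[ℝ] E)
    (w : V) (hw0 : w ≠ 0) (hvw : v w = 0)

include hinj hmul hx₀ he hw0 hvw in
lemma caseA (hsurj : ¬ Function.Surjective ⇑v)
    (hS : {n : ℕ | ∃ x, coord (v x) n ≠ 0}.Infinite) :
    ∃ W : Submodule ℝ (V →L[ℝ] E),
      Module.rank ℝ W = Cardinal.continuum ∧ v ∈ W ∧
      ∀ u ∈ W, u ≠ 0 → ¬ Function.Surjective ⇑u ∧ ¬ Function.Injective ⇑u := by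
  classical
  have hb : ∀ t : Set.Ioc (0:ℝ) 1, ∀ n : ℕ, |(t:ℝ) ^ n| ≤ (1:ℝ) := by
    intro t n
    rw [abs_pow, abs_of_pos t.2.1]
    exact pow_le_one₀ (le_of_lt t.2.1) t.2.2
  set u : Set.Ioc (0:ℝ) 1 → (V →L[ℝ] E) := fun t =>
    (Dop coord hinj hmul (fun n => (t:ℝ) ^ n) 1 (hb t)).comp v with hudef
  have hu : ∀ (t : Set.Ioc (0:ℝ) 1) (x : V) (n : ℕ),
      coord (u t x) n = (t:ℝ) ^ n • coord (v x) n := by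
    intro t x n
    have h1 := coord_Dop coord hinj hmul (fun n => (t:ℝ) ^ n) 1 (hb t) (v x)
    exact congrFun h1 n
  -- every element of the span is a generalized diagonal multiple of v
  have key : ∀ u' ∈ Submodule.span ℝ (Set.range u), ∃ (s : Finset ℝ) (c : ℝ → ℝ),
      (∀ t ∈ s, t ∈ Set.Ioc (0:ℝ) 1) ∧
      ∀ (x : V) (n : ℕ), coord (u' x) n = (∑ t ∈ s, c t * t ^ n) • coord (v x) n := by
    intro u' hu'
    induction hu' using Submodule.span_induction with
    | mem z hz =>
      obtain ⟨t, rfl⟩ := hz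
      refine ⟨{(t:ℝ)}, fun _ => 1, ?_, fun x n => ?_⟩
      · intro t' ht'
        rw [Finset.mem_singleton] at ht'
        exact ht' ▸ t.2
      · rw [hu t x n, Finset.sum_singleton, one_mul]
    | zero =>
      exact ⟨∅, 0, by simp, fun x n => by simp⟩
    | add a b _ _ ha hb =>
      obtain ⟨s₁, c₁, hs₁, h₁⟩ := ha
      obtain ⟨s₂, c₂, hs₂, h₂⟩ := hb
      refine ⟨s₁ ∪ s₂,
        fun t => (if t ∈ s₁ then c₁ t else 0) + (if t ∈ s₂ then c₂ t else 0), ?_, ?_⟩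
      · intro t ht
        rcases Finset.mem_union.1 ht with h | h
        exacts [hs₁ t h, hs₂ t h]
      · intro x n
        have hsum : ∑ t ∈ s₁ ∪ s₂,
            ((if t ∈ s₁ then c₁ t else 0) + (if t ∈ s₂ then c₂ t else 0)) * t ^ n
            = (∑ t ∈ s₁, c₁ t * t ^ n) + (∑ t ∈ s₂, c₂ t * t ^ n) := by
          rw [Finset.sum_congr rfl (fun t _ => add_mul _ _ (t ^ n)), Finset.sum_add_distrib]
          congr 1
          · rw [Finset.sum_congr rfl (fun t _ => by rw [ite_mul, zero_mul]),
              Finset.sum_ite_mem, Finset.union_inter_cancel_left]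
          · rw [Finset.sum_congr rfl (fun t _ => by rw [ite_mul, zero_mul]),
              Finset.sum_ite_mem, Finset.union_inter_cancel_right]
        rw [hsum, ContinuousLinearMap.add_apply, map_add, Pi.add_apply, h₁ x n, h₂ x n,
          add_smul]
    | smul r a _ ha =>
      obtain ⟨s₁, c₁, hs₁, h₁⟩ := ha
      refine ⟨s₁, fun t => r * c₁ t, hs₁, fun x n => ?_⟩
      have : ∑ t ∈ s₁, r * c₁ t * t ^ n = r * ∑ t ∈ s₁, c₁ t * t ^ n := by
        rw [Finset.mul_sum]
        exact Finset.sum_congr rfl (fun t _ => by ring)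
      rw [ContinuousLinearMap.smul_apply, map_smul, Pi.smul_apply, h₁ x n, this, mul_smul]
  -- v is in the family (at t = 1)
  have hone : (1:ℝ) ∈ Set.Ioc (0:ℝ) 1 := ⟨zero_lt_one, le_refl 1⟩
  have hv1 : u ⟨1, hone⟩ = v := by
    ext x
    apply hinj
    funext n
    rw [hu ⟨1, hone⟩ x n]
    simp
  -- linear independence
  have li : LinearIndependent ℝ u := by
    rw [linearIndependent_iff']
    intro s g hsum i hi
    have hβ : ∀ n ∈ {n : ℕ | ∃ x, coord (v x) n ≠ 0},
        ∑ j ∈ s, (fun r => if hr : r ∈ Set.Ioc (0:ℝ) 1 then g ⟨r, hr⟩ else 0) (j:ℝ)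
          * (j:ℝ) ^ n = 0 := by
      intro n hn
      obtain ⟨x, hx⟩ := hn
      have h1 : coord ((∑ j ∈ s, g j • u j) x) n
          = (∑ j ∈ s, g j * (j:ℝ) ^ n) • coord (v x) n := by
        rw [ContinuousLinearMap.sum_apply, map_sum, Finset.sum_apply, Finset.sum_smul]
        refine Finset.sum_congr rfl (fun j _ => ?_)
        rw [ContinuousLinearMap.smul_apply, map_smul, Pi.smul_apply, hu j x n, smul_smul]
      rw [hsum] at h1
      simp only [ContinuousLinearMap.zero_apply, map_zero, Pi.zero_apply] at h1
      rcases smul_eq_zero.1 h1.symm with h | h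
      · calc ∑ j ∈ s, (fun r => if hr : r ∈ Set.Ioc (0:ℝ) 1 then g ⟨r, hr⟩ else 0) (j:ℝ)
              * (j:ℝ) ^ n
            = ∑ j ∈ s, g j * (j:ℝ) ^ n := by
              refine Finset.sum_congr rfl (fun j _ => ?_)
              simp only [dif_pos j.2, Subtype.coe_eta]
          _ = 0 := h
      · exact absurd h hx
    have himg : ∀ r ∈ s.image (Subtype.val), r ∈ Set.Ioc (0:ℝ) 1 := by
      intro r hr
      obtain ⟨j, _, rfl⟩ := Finset.mem_image.1 hr
      exact j.2
    have := expsum_eq_zero (s.image (Subtype.val))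
      (fun r => if hr : r ∈ Set.Ioc (0:ℝ) 1 then g ⟨r, hr⟩ else 0) himg
      (hS.mono (fun n hn => by
        rw [Set.mem_setOf_eq,
          Finset.sum_image (fun a _ b _ h => Subtype.val_injective h)]
        exact hβ n hn))
      (i:ℝ) (Finset.mem_image_of_mem _ hi)
    simp only [dif_pos i.2, Subtype.coe_eta] at this
    exact this
  refine ⟨Submodule.span ℝ (Set.range u), ?_, ?_, ?_⟩
  · rw [rank_span li]
    have h2 := Cardinal.mk_range_eq_of_injective li.injective
    rw [Cardinal.mk_Ioc_real zero_lt_one, Cardinal.lift_continuum] at h2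
    simpa using h2
  · exact Submodule.subset_span ⟨⟨1, hone⟩, hv1⟩
  · intro u' hu' hne
    obtain ⟨s, c, hsc, hrep⟩ := key u' hu'
    have hker : u' w = 0 := by
      apply hinj
      funext n
      rw [map_zero, Pi.zero_apply, hrep w n, hvw, map_zero, Pi.zero_apply, smul_zero]
    constructor
    · -- non-surjective
      by_cases hz : ∃ n, (∑ t ∈ s, c t * t ^ n) = 0
      · obtain ⟨n, hn⟩ := hz
        intro hsur
        obtain ⟨x, hx⟩ := hsur (e n)
        have h1 := congrFun (congrArg (⇑coord) hx) n
        rw [hrep x n, hn, zero_smul, he n] at h1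
        simp only [if_pos rfl] at h1
        exact hx₀ h1.symm
      · push_neg at hz
        intro hsur
        apply hsurj
        intro z
        have hbC : ∀ n, |∑ t ∈ s, c t * t ^ n| ≤ ∑ t ∈ s, |c t| := by
          intro n
          refine le_trans (Finset.abs_sum_le_sum_abs _ _) (Finset.sum_le_sum (fun t ht => ?_))
          rw [abs_mul]
          calc |c t| * |t ^ n| ≤ |c t| * 1 := by
                refine mul_le_mul_of_nonneg_left ?_ (abs_nonneg _)
                rw [abs_pow, abs_of_pos (hsc t ht).1]
                exact pow_le_one₀ (le_of_lt (hsc t ht).1) (hsc t ht).2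
            _ = |c t| := mul_one _
        obtain ⟨x, hx⟩ := hsur
          (Dop coord hinj hmul (fun n => ∑ t ∈ s, c t * t ^ n) (∑ t ∈ s, |c t|) hbC z)
        refine ⟨x, ?_⟩
        apply hinj
        funext n
        have h1 := congrFun (congrArg (⇑coord) hx) n
        rw [hrep x n,
          coord_Dop coord hinj hmul (fun n => ∑ t ∈ s, c t * t ^ n) (∑ t ∈ s, |c t|) hbC z]
          at h1
        exact smul_right_injective X (hz n) h1
    · -- non-injective
      intro hI
      exact hw0 (hI (by rw [hker, map_zero]))

include hinj hmul hx₀ he hw0 hvw in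
lemma caseB [CompleteSpace E]
    (hv : v ≠ 0)
    (f : V →L[ℝ] ℝ) (hfw : f w = 0) (x₁ : V) (hfx₁ : f x₁ = 1)
    (hS' : {n : ℕ | ∃ x, coord (v x) n ≠ 0}ᶜ.Infinite) :
    ∃ W : Submodule ℝ (V →L[ℝ] E),
      Module.rank ℝ W = Cardinal.continuum ∧ v ∈ W ∧
      ∀ u ∈ W, u ≠ 0 → ¬ Function.Surjective ⇑u ∧ ¬ Function.Injective ⇑u := by
  classical
  set g : ℕ ↪ ↥({n : ℕ | ∃ x, coord (v x) n ≠ 0}ᶜ) := hS'.natEmbedding with hgdef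
  set n₁ : ℕ := (g 0 : ℕ) with hn₁def
  set m : ℕ → ℕ := fun k => (g (k + 1) : ℕ) with hmdef
  have hminj : Function.Injective m := by
    intro a b hab
    have := g.injective (Subtype.ext hab)
    omega
  have hmn₁ : ∀ k, m k ≠ n₁ := by
    intro k h
    have := g.injective (Subtype.ext h)
    omega
  have hmS : ∀ k x, coord (v x) (m k) = 0 := by
    intro k x
    have := (g (k + 1)).2
    simp only [Set.mem_compl_iff, Set.mem_setOf_eq, not_exists, not_not] at this
    exact this x
  have hn₁S : ∀ x, coord (v x) n₁ = 0 := by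
    intro x
    have := (g 0).2
    simp only [Set.mem_compl_iff, Set.mem_setOf_eq, not_exists, not_not] at this
    exact this x
  have hene : ∀ n, e n ≠ 0 := by
    intro n hn
    have := congrFun (he n) n
    rw [hn, map_zero] at this
    simp only [Pi.zero_apply, if_pos rfl] at this
    exact hx₀ this.symm
  set e' : ℕ → E := fun k => ‖e (m k)‖⁻¹ • e (m k) with he'def
  have he'norm : ∀ k, ‖e' k‖ = 1 := by
    intro k
    rw [he'def]
    simp only [norm_smul, norm_inv, norm_norm]
    exact inv_mul_cancel₀ (norm_ne_zero_iff.2 (hene (m k)))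
  have he'ne : ∀ k, e' k ≠ 0 := by
    intro k h
    have := he'norm k
    rw [h, norm_zero] at this
    norm_num at this
  have hsummable : ∀ t : Set.Ioc (0:ℝ) 1, Summable (fun k : ℕ => ((t:ℝ) / 2) ^ k • e' k) := by
    intro t
    apply Summable.of_norm
    refine Summable.of_nonneg_of_le (fun k => norm_nonneg _) (fun k => ?_)
      (summable_geometric_of_lt_one (by norm_num) (by norm_num : (1:ℝ)/2 < 1))
    rw [norm_smul, he'norm, mul_one, norm_pow, Real.norm_eq_abs,
      abs_of_pos (by linarith [t.2.1] : (0:ℝ) < (t:ℝ)/2)]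
    exact pow_le_pow_left₀ (by linarith [t.2.1]) (by linarith [t.2.2]) k
  set y : Set.Ioc (0:ℝ) 1 → E := fun t => ∑' k : ℕ, ((t:ℝ) / 2) ^ k • e' k with hydef
  have hb1 : ∀ n : ℕ, ∀ j : ℕ, |(fun j => if j = n then (1:ℝ) else 0) j| ≤ (1:ℝ) := by
    intro n j
    by_cases h : j = n <;> simp [h]
  set P : ℕ → (E →L[ℝ] E) := fun n =>
    Dop coord hinj hmul (fun j => if j = n then (1:ℝ) else 0) 1 (hb1 n) with hPdef
  have hPcoord : ∀ n (z : E) (j : ℕ),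
      coord (P n z) j = (if j = n then (1:ℝ) else 0) • coord z j := by
    intro n z j
    exact congrFun (coord_Dop coord hinj hmul _ 1 (hb1 n) z) j
  have hPe : ∀ n k, P n (e k) = if k = n then e k else 0 := by
    intro n k
    apply hinj
    funext j
    rw [hPcoord n (e k) j]
    by_cases hkn : k = n
    · subst hkn
      rw [if_pos rfl]
      by_cases hj : j = k
      · subst hj; simp
      · rw [if_neg hj, zero_smul, congrFun (he k) j, if_neg hj]
    · rw [if_neg hkn, map_zero, Pi.zero_apply]
      by_cases hj : j = n
      · subst hj
        rw [if_pos rfl, one_smul, congrFun (he k) j, if_neg (fun h => hkn h.symm)]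
      · rw [if_neg hj, zero_smul]
  have hPe' : ∀ n k, P n (e' k) = if m k = n then e' k else 0 := by
    intro n k
    rw [he'def]
    simp only [map_smul, hPe n (m k)]
    by_cases h : m k = n <;> simp [h]
  have hPy : ∀ (t : Set.Ioc (0:ℝ) 1) (n : ℕ), (∀ k, m k ≠ n) → P n (y t) = 0 := by
    intro t n hn
    show P n (∑' k : ℕ, ((t:ℝ) / 2) ^ k • e' k) = 0
    rw [ContinuousLinearMap.map_tsum _ (hsummable t)]
    have hterm : ∀ k : ℕ, P n (((t:ℝ) / 2) ^ k • e' k) = 0 := by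
      intro k
      rw [map_smul, hPe' n k, if_neg (hn k), smul_zero]
    simp only [hterm]
    exact tsum_zero
  have hPym : ∀ (t : Set.Ioc (0:ℝ) 1) (k : ℕ), P (m k) (y t) = ((t:ℝ) / 2) ^ k • e' k := by
    intro t k
    show P (m k) (∑' j : ℕ, ((t:ℝ) / 2) ^ j • e' j) = ((t:ℝ) / 2) ^ k • e' k
    rw [ContinuousLinearMap.map_tsum _ (hsummable t), tsum_eq_single k (fun j hj => ?_)]
    · rw [map_smul, hPe', if_pos rfl]
    · rw [map_smul, hPe', if_neg (fun h => hj (hminj h)), smul_zero]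
  have hycoord : ∀ (t : Set.Ioc (0:ℝ) 1) (n : ℕ), (∀ k, m k ≠ n) → coord (y t) n = 0 := by
    intro t n hn
    have h0 := hPy t n hn
    have h1 := hPcoord n (y t) n
    rw [h0, map_zero] at h1
    simpa using h1.symm
  -- linear independence of the rank-one part
  have liy : LinearIndependent ℝ
      (fun t : Set.Ioc (0:ℝ) 1 => (f.smulRight (y t) : V →L[ℝ] E)) := by
    rw [linearIndependent_iff']
    intro s gc hsum i hi
    have h1 : (∑ j ∈ s, gc j • f.smulRight (y j)) x₁ = 0 := by rw [hsum]; rfl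
    rw [ContinuousLinearMap.sum_apply] at h1
    simp only [ContinuousLinearMap.smul_apply, ContinuousLinearMap.smulRight_apply,
      hfx₁, one_smul] at h1
    have h3 : ∀ k : ℕ, ∑ j ∈ s, gc j * ((j:ℝ)/2) ^ k = 0 := by
      intro k
      have h2 : (∑ j ∈ s, gc j * ((j:ℝ)/2) ^ k) • e' k = 0 := by
        have hP1 := congrArg (⇑(P (m k))) h1
        rw [map_sum, map_zero] at hP1
        calc (∑ j ∈ s, gc j * ((j:ℝ)/2) ^ k) • e' k
            = ∑ j ∈ s, gc j • P (m k) (y j) := by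
              rw [Finset.sum_smul]
              refine Finset.sum_congr rfl (fun j _ => ?_)
              rw [hPym j k]
              exact (smul_smul (gc j) (((j:ℝ)/2) ^ k) (e' k)).symm
          _ = 0 := by
              rw [← hP1]
              exact Finset.sum_congr rfl (fun j _ => (map_smul _ _ _).symm)
      rcases smul_eq_zero.1 h2 with h | h
      · exact h
      · exact absurd h (he'ne k)
    set φ : Set.Ioc (0:ℝ) 1 → ℝ := fun i => (i:ℝ)/2 with hφdef
    have hφinj : Function.Injective φ := by
      intro a b h
      simp only [hφdef] at h
      exact Subtype.ext (by linarith)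
    set c : ℝ → ℝ := fun r => if hr : 2 * r ∈ Set.Ioc (0:ℝ) 1 then gc ⟨2 * r, hr⟩ else 0
      with hcdef
    have hcφ : ∀ i : Set.Ioc (0:ℝ) 1, c (φ i) = gc i := by
      intro i
      have h2i : 2 * ((i:ℝ)/2) = (i:ℝ) := by ring
      have hmem : 2 * ((i:ℝ)/2) ∈ Set.Ioc (0:ℝ) 1 := by rw [h2i]; exact i.2
      show (if hr : 2 * ((i:ℝ)/2) ∈ Set.Ioc (0:ℝ) 1 then gc ⟨2 * ((i:ℝ)/2), hr⟩ else 0) = gc i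
      rw [dif_pos hmem]
      have hsub : (⟨2 * ((i:ℝ)/2), hmem⟩ : Set.Ioc (0:ℝ) 1) = i := Subtype.ext h2i
      rw [hsub]
    have himg : ∀ r ∈ s.image φ, r ∈ Set.Ioc (0:ℝ) 1 := by
      intro r hr
      obtain ⟨j, _, rfl⟩ := Finset.mem_image.1 hr
      simp only [hφdef]
      exact ⟨div_pos j.2.1 two_pos, by linarith [j.2.2]⟩
    have hvanish : {n : ℕ | ∑ r ∈ s.image φ, c r * r ^ n = 0}.Infinite := by
      have huniv : {n : ℕ | ∑ r ∈ s.image φ, c r * r ^ n = 0} = Set.univ := by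
        ext n
        simp only [Set.mem_setOf_eq, Set.mem_univ, iff_true]
        rw [Finset.sum_image (fun a _ b _ h => hφinj h)]
        calc ∑ j ∈ s, c (φ j) * (φ j) ^ n = ∑ j ∈ s, gc j * ((j:ℝ)/2) ^ n :=
              Finset.sum_congr rfl (fun j _ => by rw [hcφ j])
          _ = 0 := h3 n
      rw [huniv]
      exact Set.infinite_univ
    have hfin := expsum_eq_zero (s.image φ) c himg hvanish (φ i)
      (Finset.mem_image_of_mem _ hi)
    rw [hcφ i] at hfin
    exact hfin
  -- v is not in the span of the rank-one part
  have hvnot : v ∉ Submodule.span ℝ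
      (Set.range (fun t : Set.Ioc (0:ℝ) 1 => (f.smulRight (y t) : V →L[ℝ] E))) := by
    intro hmem
    have hQ : ∀ u' ∈ Submodule.span ℝ
        (Set.range (fun t : Set.Ioc (0:ℝ) 1 => (f.smulRight (y t) : V →L[ℝ] E))),
        ∀ (x : V) (n : ℕ), (∀ k, m k ≠ n) → coord (u' x) n = 0 := by
      intro u' hu'
      induction hu' using Submodule.span_induction with
      | mem z hz =>
        obtain ⟨t, rfl⟩ := hz
        intro x n hn
        simp only [ContinuousLinearMap.smulRight_apply, map_smul, Pi.smul_apply]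
        rw [hycoord t n hn, smul_zero]
      | zero => intro x n hn; simp
      | add a b _ _ ha hb =>
        intro x n hn
        rw [ContinuousLinearMap.add_apply, map_add, Pi.add_apply, ha x n hn, hb x n hn,
          add_zero]
      | smul r a _ ha =>
        intro x n hn
        rw [ContinuousLinearMap.smul_apply, map_smul, Pi.smul_apply, ha x n hn, smul_zero]
    obtain ⟨x, hx⟩ : ∃ x, v x ≠ 0 := by
      by_contra h
      push_neg at h
      exact hv (ContinuousLinearMap.ext (fun x => by rw [h x]; rfl))
    have hcoordne : coord (v x) ≠ 0 := fun h0 => hx (hinj (by rw [h0, map_zero]))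
    obtain ⟨n₀, hn₀⟩ : ∃ n₀, coord (v x) n₀ ≠ 0 := by
      by_contra h
      push_neg at h
      exact hcoordne (funext h)
    have hn₀m : ∀ k, m k ≠ n₀ := by
      intro k hk
      exact hn₀ (hk ▸ hmS k x)
    exact hn₀ (hQ v hmem x n₀ hn₀m)
  have liF : LinearIndependent ℝ
      (fun o : Option (Set.Ioc (0:ℝ) 1) =>
        o.casesOn' v (fun t => (f.smulRight (y t) : V →L[ℝ] E))) :=
    linearIndependent_option'.2 ⟨liy, hvnot⟩
  refine ⟨Submodule.span ℝ (Set.range (fun o : Option (Set.Ioc (0:ℝ) 1) =>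
      o.casesOn' v (fun t => (f.smulRight (y t) : V →L[ℝ] E)))), ?_, ?_, ?_⟩
  · rw [rank_span liF]
    have h2 := Cardinal.mk_range_eq_of_injective liF.injective
    rw [Cardinal.mk_option, Cardinal.mk_Ioc_real zero_lt_one,
      Cardinal.add_one_eq Cardinal.aleph0_le_continuum, Cardinal.lift_continuum] at h2
    simpa using h2
  · exact Submodule.subset_span ⟨none, rfl⟩
  · have hR : ∀ u' ∈ Submodule.span ℝ (Set.range (fun o : Option (Set.Ioc (0:ℝ) 1) =>
        o.casesOn' v (fun t => (f.smulRight (y t) : V →L[ℝ] E)))),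
        u' w = 0 ∧ ∀ x : V, coord (u' x) n₁ = 0 := by
      intro u' hu'
      induction hu' using Submodule.span_induction with
      | mem z hz =>
        obtain ⟨o, rfl⟩ := hz
        cases o with
        | none => exact ⟨hvw, fun x => hn₁S x⟩
        | some t =>
          constructor
          · show f w • y t = 0
            rw [hfw, zero_smul]
          · intro x
            show coord (f x • y t) n₁ = 0
            rw [map_smul, Pi.smul_apply, hycoord t n₁ (fun k => hmn₁ k), smul_zero]
      | zero => exact ⟨rfl, fun x => by simp⟩
      | add a b _ _ ha hb =>
        exact ⟨by rw [ContinuousLinearMap.add_apply, ha.1, hb.1, add_zero],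
          fun x => by
            rw [ContinuousLinearMap.add_apply, map_add, Pi.add_apply, ha.2 x, hb.2 x,
              add_zero]⟩
      | smul r a _ ha =>
        exact ⟨by rw [ContinuousLinearMap.smul_apply, ha.1, smul_zero],
          fun x => by
            rw [ContinuousLinearMap.smul_apply, map_smul, Pi.smul_apply, ha.2 x, smul_zero]⟩
    intro u' hu' hne
    obtain ⟨hker, hcoordz⟩ := hR u' hu'
    constructor
    · intro hsur
      obtain ⟨x, hx⟩ := hsur (e n₁)
      have h1 := congrFun (congrArg (⇑coord) hx) n₁
      have h2 : coord (e n₁) n₁ = x₀ := by rw [congrFun (he n₁) n₁, if_pos rfl]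
      rw [hcoordz x, h2] at h1
      exact hx₀ h1.symm
    · intro hI
      exact hw0 (hI (by rw [hker, map_zero]))

end Cases

/-- For V ≠ {0} normed, X ≠ {0} Banach and E a reasonable sequence space,
the set of continuous linear operators V → E that are both non-surjective and
non-injective is (1, 𝔠)-lineable. -/
theorem stmt14 {V X E : Type*}
    [NormedAddCommGroup V] [NormedSpace ℝ V] [Nontrivial V]
    [NormedAddCommGroup X] [NormedSpace ℝ X] [CompleteSpace X] [Nontrivial X]
    [NormedAddCommGroup E] [NormedSpace ℝ E] [CompleteSpace E]
    (coord : E →ₗ[ℝ] (ℕ → X))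
    (hinj : Function.Injective coord)
    (hc00 : ∀ f : ℕ → X, (Function.support f).Finite → f ∈ Set.range coord)
    (hmul : ∀ (α : ℕ → ℝ) (C : ℝ), (∀ n, |α n| ≤ C) → ∀ x : E,
      ∃ y : E, coord y = (fun n => α n • coord x n) ∧ ‖y‖ ≤ C * ‖x‖)
    (v : V →L[ℝ] E) (hv : v ≠ 0)
    (hsurj : ¬ Function.Surjective ⇑v) (hninj : ¬ Function.Injective ⇑v) :
    ∃ W : Submodule ℝ (V →L[ℝ] E),
      Module.rank ℝ W = Cardinal.continuum ∧ v ∈ W ∧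
      ∀ u ∈ W, u ≠ 0 → ¬ Function.Surjective ⇑u ∧ ¬ Function.Injective ⇑u := by
  classical
  obtain ⟨x₀, hx₀⟩ := exists_ne (0 : X)
  have heex : ∀ n : ℕ, ∃ z : E, coord z = fun m => if m = n then x₀ else 0 := by
    intro n
    have hfin : (Function.support (fun m : ℕ => if m = n then x₀ else 0)).Finite := by
      refine Set.Finite.subset (Set.finite_singleton n) ?_
      intro j hj
      by_contra h
      exact hj (if_neg (by simpa using h))
    obtain ⟨z, hz⟩ := hc00 _ hfin
    exact ⟨z, hz⟩
  choose e he using heex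
  rw [Function.not_injective_iff] at hninj
  obtain ⟨a, b, hab, hne⟩ := hninj
  have hw0 : a - b ≠ 0 := sub_ne_zero.2 hne
  have hvw : v (a - b) = 0 := by rw [map_sub, hab, sub_self]
  by_cases hS : {n : ℕ | ∃ x, coord (v x) n ≠ 0}.Infinite
  · exact caseA coord hinj hmul x₀ hx₀ e he v (a - b) hw0 hvw hsurj hS
  · have hS' : {n : ℕ | ∃ x, coord (v x) n ≠ 0}ᶜ.Infinite :=
      Set.Finite.infinite_compl (Set.not_infinite.1 hS)
    obtain ⟨x₁, hx₁⟩ : ∃ x, v x ≠ 0 := by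
      by_contra h
      push_neg at h
      exact hv (ContinuousLinearMap.ext (fun x => by rw [h x]; rfl))
    have hli : LinearIndependent ℝ ![x₁, a - b] := by
      rw [linearIndependent_fin2]
      constructor
      · simpa using hw0
      · intro r hr
        simp only [Matrix.cons_val_one, Matrix.head_cons, Matrix.cons_val_zero] at hr
        apply hx₁
        rw [← hr, map_smul, hvw, smul_zero]
    have hmem₁ : x₁ ∈ Submodule.span ℝ (Set.range ![x₁, a - b]) :=
      Submodule.subset_span ⟨0, rfl⟩
    have hmemw : a - b ∈ Submodule.span ℝ (Set.range ![x₁, a - b]) :=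
      Submodule.subset_span ⟨1, rfl⟩
    have hfd : FiniteDimensional ℝ (Submodule.span ℝ (Set.range ![x₁, a - b])) :=
      FiniteDimensional.span_of_finite ℝ (Set.finite_range _)
    set B : Module.Basis (Fin 2) ℝ (Submodule.span ℝ (Set.range ![x₁, a - b])) :=
      Module.Basis.span hli with hBdef
    set f₀ : (Submodule.span ℝ (Set.range ![x₁, a - b])) →ₗ[ℝ] ℝ :=
      B.constr ℝ ![(1:ℝ), 0] with hf₀def
    obtain ⟨F, hF, -⟩ := exists_extension_norm_eq _
      (LinearMap.toContinuousLinearMap f₀)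
    have hB0 : B 0 = ⟨x₁, hmem₁⟩ := Subtype.ext (by rw [hBdef, Module.Basis.span_apply]; rfl)
    have hB1 : B 1 = ⟨a - b, hmemw⟩ := Subtype.ext (by rw [hBdef, Module.Basis.span_apply]; rfl)
    have hFx₁ : F x₁ = 1 := by
      have h := hF ⟨x₁, hmem₁⟩
      rw [h, LinearMap.coe_toContinuousLinearMap', ← hB0, hf₀def, Module.Basis.constr_basis]
      rfl
    have hFw : F (a - b) = 0 := by
      have h := hF ⟨a - b, hmemw⟩
      rw [h, LinearMap.coe_toContinuousLinearMap', ← hB1, hf₀def, Module.Basis.constr_basis]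
      rfl
    exact caseB coord hinj hmul x₀ hx₀ e he v (a - b) hw0 hvw hv F hFw x₁ hFx₁ hS'
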